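/- Let N be a tree-child time consistent hybridization network with more than two leaves. Then at least one of the following reductions can be applied to N: (U) there is a tree leaf whose parent has only that child; (T) there are two sibling tree leaves; or (H) there is a hybrid leaf each of whose parents has a tree leaf child. -/

import Mathlib

open Classical

/-- A walk (path) in a digraph: a nonempty list of vertices with consecutive arcs. -/
def IsWalk {V : Type} (E : V → V → Prop) (p : List V) : Prop := p ≠ [] ∧ p.Chain' E

/-- A path with origin `u` and end `v`. -/
def WalkFromTo {V : Type} (E : V → V → Prop) (u v : V) (p : List V) : Prop :=
  IsWalk E p ∧ p.head? = some u ∧ p.getLast? = some v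

/-- `v` is a descendant of `u` (possibly trivial path from `u` to `v`). -/
def Desc {V : Type} (E : V → V → Prop) (u v : V) : Prop := Relation.ReflTransGen E u v

/-- A root: a node with no incoming arcs. -/
def IsRootNode {V : Type} (E : V → V → Prop) (r : V) : Prop := ∀ u, ¬ E u r

/-- `u` is a strict ancestor of `v`: `v` is a descendant of `u` and every path
from a root to `v` contains `u`. -/
def StrictAnc {V : Type} (E : V → V → Prop) (u v : V) : Prop :=
  Desc E u v ∧ ∀ (r : V) (p : List V), IsRootNode E r → WalkFromTo E r v p → u ∈ p

/-- In-degree. -/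
noncomputable def indeg {V : Type} (E : V → V → Prop) (v : V) : ℕ := {u | E u v}.ncard
/-- Out-degree. -/
noncomputable def outdeg {V : Type} (E : V → V → Prop) (v : V) : ℕ := {w | E v w}.ncard

/-- Tree node: in-degree at most 1. -/
def IsTreeNode {V : Type} (E : V → V → Prop) (v : V) : Prop := indeg E v ≤ 1
/-- Hybrid node: in-degree at least 2. -/
def IsHybrid {V : Type} (E : V → V → Prop) (v : V) : Prop := 2 ≤ indeg E v
/-- Leaf: no outgoing arcs. -/
def IsLeaf {V : Type} (E : V → V → Prop) (v : V) : Prop := ∀ w, ¬ E v w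

/-- Acyclicity: no non-trivial path from a node to itself. -/
def Acyclic {V : Type} (E : V → V → Prop) : Prop := ∀ v, ¬ Relation.TransGen E v v

/-- A hybridization network: a rooted DAG whose single root has out-degree > 1. -/
structure IsHybNet {V : Type} (E : V → V → Prop) (r : V) : Prop where
  acyclic : Acyclic E
  isRoot : IsRootNode E r
  uniqueRoot : ∀ x, IsRootNode E x → x = r
  rootOut : 2 ≤ outdeg E r

/-- Tree-child condition: every internal node has a tree-node child. -/
def TreeChild {V : Type} (E : V → V → Prop) : Prop :=
  ∀ v, ¬ IsLeaf E v → ∃ w, E v w ∧ IsTreeNode E w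

/-- Time consistency: a temporal representation exists. -/
def TimeConsistent {V : Type} (E : V → V → Prop) : Prop :=
  ∃ τ : V → ℕ, ∀ u v, E u v → (IsTreeNode E v → τ u < τ v) ∧ (IsHybrid E v → τ u = τ v)

/-- The leaves are bijectively labeled by `S` via `leaf`. -/
def LabelsLeaves {V S : Type} (E : V → V → Prop) (leaf : S → V) : Prop :=
  Function.Injective leaf ∧ (∀ s, IsLeaf E (leaf s)) ∧ ∀ v, IsLeaf E v → ∃ s, leaf s = v

/-- Distance: length of a shortest path from `u` to `v`. -/
noncomputable def dist {V : Type} (E : V → V → Prop) (u v : V) : ℕ :=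
  sInf {n | ∃ p, WalkFromTo E u v p ∧ p.length = n + 1}

/-- Height: largest length of a path from `v` to a leaf. -/
noncomputable def height {V : Type} (E : V → V → Prop) (v : V) : ℕ :=
  sSup {n | ∃ p w, WalkFromTo E v w p ∧ IsLeaf E w ∧ p.length = n + 1}

/-- Common ancestors of `u` and `v` that are strict ancestors of at least one of them. -/
def CSASet {V : Type} (E : V → V → Prop) (u v : V) : Set V :=
  {x | Desc E x u ∧ Desc E x v ∧ (StrictAnc E x u ∨ StrictAnc E x v)}

/-- `x` is a least common semi-strict ancestor of `u` and `v`. -/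
def IsLCSA {V : Type} (E : V → V → Prop) (u v x : V) : Prop :=
  x ∈ CSASet E u v ∧ ∀ y ∈ CSASet E u v, height E x ≤ height E y

/-- The least common semi-strict ancestor `[u,v]` (the root `r` witnesses nonemptiness). -/
noncomputable def lcsa {V : Type} (E : V → V → Prop) (r u v : V) : V :=
  @Classical.epsilon V ⟨r⟩ (IsLCSA E u v)

/-- `ℓ_N(u,v)`: the distance from `[u,v]` to `u`. -/
noncomputable def ell {V : Type} (E : V → V → Prop) (r u v : V) : ℕ :=
  dist E (lcsa E r u v) u

/-- `L_N(u,v) = ℓ_N(u,v) + ℓ_N(v,u)`: the LCSA-path length between `u` and `v`. -/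
noncomputable def pathLen {V : Type} (E : V → V → Prop) (r u v : V) : ℕ :=
  ell E r u v + ell E r v u

/-- `h_N(u,v)`: −1 if `[u,v]` is a strict ancestor of `u` only, 1 if of `v` only, 0 if of both. -/
noncomputable def hval {V : Type} (E : V → V → Prop) (r u v : V) : ℤ :=
  if StrictAnc E (lcsa E r u v) u then
    (if StrictAnc E (lcsa E r u v) v then 0 else -1)
  else 1

/-- Siblings: distinct nodes sharing a parent. -/
def Sibling {V : Type} (E : V → V → Prop) (u v : V) : Prop :=
  u ≠ v ∧ ∃ p, E p u ∧ E p v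

/-- A tree path: a non-trivial path whose end and intermediate nodes are tree nodes. -/
def TreePath {V : Type} (E : V → V → Prop) (p : List V) (u v : V) : Prop :=
  WalkFromTo E u v p ∧ 2 ≤ p.length ∧ ∀ w ∈ p.tail, IsTreeNode E w

/-- `v` is a tree descendant of `u`. -/
def TreeDesc {V : Type} (E : V → V → Prop) (u v : V) : Prop := ∃ p, TreePath E p u v

/-- Quasi-binary hybridization network. -/
def QuasiBinary {V : Type} (E : V → V → Prop) : Prop :=
  ∀ v : V, (indeg E v, outdeg E v) ∈ ({(0,2),(1,0),(1,2),(2,0),(2,1),(2,2)} : Set (ℕ × ℕ))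

/-- Fully resolved hybridization network node types. -/
def FullyResolvedHyb {V : Type} (E : V → V → Prop) : Prop :=
  ∀ v : V, (indeg E v, outdeg E v) ∈ ({(0,2),(1,0),(1,2),(2,0),(2,2)} : Set (ℕ × ℕ))

/-- Fully resolved phylogenetic network node types. -/
def FullyResolvedPhylo {V : Type} (E : V → V → Prop) : Prop :=
  ∀ v : V, (indeg E v, outdeg E v) ∈ ({(0,2),(1,0),(1,2),(2,1)} : Set (ℕ × ℕ))

/-- Phylogenetic network condition: every hybrid node has exactly one child, a tree node. -/
def PhyloNet {V : Type} (E : V → V → Prop) : Prop :=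
  ∀ v, IsHybrid E v → ∃ w, E v w ∧ IsTreeNode E w ∧ ∀ x, E v x → x = w

/-- In a TCTC hybridization network with more than two leaves, at least one
of the U, T, H reductions can be applied. -/
theorem stmt6 {V : Type} [Fintype V] (E : V → V → Prop) (r : V)
    (hnet : IsHybNet E r) (htc : TreeChild E) (hti : TimeConsistent E)
    (hleaves : 2 < {v | IsLeaf E v}.ncard) :
    (∃ i u, IsLeaf E i ∧ IsTreeNode E i ∧ E u i ∧ ∀ w, E u w → w = i) ∨
    (∃ i j, IsLeaf E i ∧ IsTreeNode E i ∧ IsLeaf E j ∧ IsTreeNode E j ∧ Sibling E i j) ∨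
    (∃ i, IsLeaf E i ∧ IsHybrid E i ∧
      ∀ v, E v i → ∃ j, E v j ∧ IsLeaf E j ∧ IsTreeNode E j ∧ j ≠ i) := by
  classical
  obtain ⟨τ, hτ⟩ := hti
  have tri : ∀ v, IsTreeNode E v ∨ IsHybrid E v := by
    intro v; unfold IsTreeNode IsHybrid; omega
  have hrint : ¬ IsLeaf E r := by
    intro h
    have h0 : {w | E r w} = (∅ : Set V) := Set.eq_empty_iff_forall_notMem.mpr h
    have h2 := hnet.rootOut
    rw [outdeg, h0] at h2
    simp at h2
  have hfin : ({v | ¬ IsLeaf E v} : Set V).toFinset.Nonempty :=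
    ⟨r, by simpa using hrint⟩
  obtain ⟨u0, hu0, hmax0⟩ := Finset.exists_max_image _ τ hfin
  have hmax : ∀ v, ¬ IsLeaf E v → τ v ≤ τ u0 := by
    intro v hv; exact hmax0 v (by simpa using hv)
  -- the tree child of any internal node with maximal τ is a leaf
  have key : ∀ v, ¬ IsLeaf E v → τ u0 ≤ τ v →
      ∃ j, E v j ∧ IsLeaf E j ∧ IsTreeNode E j := by
    intro v hv hτv
    obtain ⟨j, hvj, hjt⟩ := htc v hv
    refine ⟨j, hvj, ?_, hjt⟩
    by_contra hj
    have h1 := (hτ v j hvj).1 hjt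
    have h2 : τ j ≤ τ u0 := hmax j hj
    omega
  -- pick a reachability-maximal element of S = {internal with maximal τ}
  haveI : IsTrans V (fun a b => Relation.TransGen E b a) := ⟨fun a b c h1 h2 => h2.trans h1⟩
  haveI : IsIrrefl V (fun a b => Relation.TransGen E b a) := ⟨fun a h => hnet.acyclic a h⟩
  have hwf := Finite.wellFounded_of_trans_of_irrefl (fun a b : V => Relation.TransGen E b a)
  have hSne : ({v | ¬ IsLeaf E v ∧ τ v = τ u0} : Set V).Nonempty :=
    ⟨u0, by simpa using hu0, rfl⟩
  obtain ⟨u, hu, humax⟩ := hwf.has_min _ hSne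
  obtain ⟨huint, huτ⟩ := hu
  obtain ⟨i, hui, hil, hit⟩ := key u huint (le_of_eq huτ.symm)
  by_cases hex : ∃ w, E u w ∧ w ≠ i
  · obtain ⟨w, huw, hwne⟩ := hex
    rcases tri w with hwt | hwh
    · -- w is a tree node: it must be a leaf, giving T
      have hwl : IsLeaf E w := by
        by_contra hwl
        have h1 := (hτ u w huw).1 hwt
        have h2 : τ w ≤ τ u0 := hmax w hwl
        omega
      exact Or.inr (Or.inl ⟨i, w, hil, hit, hwl, hwt,
        fun h => hwne h.symm, u, hui, huw⟩)
    · -- w is hybrid: it must be a leaf, giving H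
      have hτw : τ w = τ u0 := by
        have := (hτ u w huw).2 hwh; omega
      have hwl : IsLeaf E w := by
        by_contra hwl
        exact humax w ⟨hwl, hτw⟩ (Relation.TransGen.single huw)
      refine Or.inr (Or.inr ⟨w, hwl, hwh, ?_⟩)
      intro v hvw
      have hvint : ¬ IsLeaf E v := fun hl => hl w hvw
      have hτv : τ v = τ u0 := by
        have := (hτ v w hvw).2 hwh; omega
      obtain ⟨j, hvj, hjl, hjt⟩ := key v hvint (le_of_eq hτv.symm)
      refine ⟨j, hvj, hjl, hjt, ?_⟩
      intro hje
      subst hje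
      exact absurd hjt (by unfold IsTreeNode; unfold IsHybrid at hwh; omega)
  · -- u has only child i, giving U
    push_neg at hex
    exact Or.inl ⟨i, u, hil, hit, hui, hex⟩
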